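/- For every natural number n ≥ 1, the lower incomplete gamma function satisfies γ(n/2, n/2) ≥ (1/2)·Γ(n/2); equivalently, ∫₀^{n/2} t^{n/2 − 1} e^{−t} dt ≥ (1/2)·∫₀^{∞} t^{n/2 − 1} e^{−t} dt. In probabilistic terms, a chi-squared random variable with n degrees of freedom is at most n with probability at least 1/2. -/

import Mathlib

open Real MeasureTheory Set intervalIntegral

lemma my_sinh_aux {y : ℝ} (hy : 0 ≤ y) : 2*y ≤ Real.exp y - Real.exp (-y) := by
  have h := Real.self_le_sinh_iff.mpr hy
  rw [Real.sinh_eq] at h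
  linarith

lemma my_core {s x : ℝ} (hs : 0 < s) (hx : 0 < x) (hxs : x ≤ s) :
    (s^2/x^2) * (Real.exp (-(s^2/x)) * (s^2/x) ^ (s-1)) ≤ Real.exp (-x) * x ^ (s-1) := by
  obtain ⟨L, rfl⟩ : ∃ L, Real.exp L = s := ⟨Real.log s, Real.exp_log hs⟩
  obtain ⟨M, rfl⟩ : ∃ M, Real.exp M = x := ⟨Real.log x, Real.exp_log hx⟩
  have hML : M ≤ L := Real.exp_le_exp.mp hxs
  have h1 : (Real.exp L)^2 / Real.exp M = Real.exp (2*L - M) := by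
    rw [← Real.exp_nat_mul, Real.exp_sub]; norm_num
  have h2 : (Real.exp L)^2 / (Real.exp M)^2 = Real.exp (2*L - 2*M) := by
    rw [← Real.exp_nat_mul, ← Real.exp_nat_mul, Real.exp_sub]; norm_num
  rw [h1, h2, ← Real.exp_mul, ← Real.exp_mul, ← Real.exp_add, ← Real.exp_add,
    ← Real.exp_add, Real.exp_le_exp]
  have key : 2*(L - M) ≤ Real.exp (L - M) - Real.exp (M - L) := by
    have := my_sinh_aux (y := L - M) (by linarith)
    simpa [neg_sub] using this
  have e1 : Real.exp (2*L - M) = Real.exp L * Real.exp (L - M) := by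
    rw [← Real.exp_add]; ring_nf
  have e2 : Real.exp M = Real.exp L * Real.exp (M - L) := by
    rw [← Real.exp_add]; ring_nf
  nlinarith [mul_le_mul_of_nonneg_left key (Real.exp_pos L).le, Real.exp_pos L]

/-- Tail `∫_s^∞` is at most the head `∫_(0,s]` for the Gamma integrand. -/
lemma my_tail_le_head {s : ℝ} (hs : 0 < s) :
    (∫ t in Ioi s, Real.exp (-t) * t ^ (s-1)) ≤ ∫ t in Ioc 0 s, Real.exp (-t) * t ^ (s-1) := by
  set g : ℝ → ℝ := fun t => Real.exp (-t) * t ^ (s-1) with hg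
  have hgi : IntegrableOn g (Ioi 0) := Real.GammaIntegral_convergent hs
  have hgc : ContinuousOn g (Ioi 0) := by
    apply ContinuousOn.mul
    · exact (continuous_neg.rexp).continuousOn
    · exact fun x hx => (Real.continuousAt_rpow_const x _ (Or.inl (ne_of_gt hx))).continuousWithinAt
  have hT := intervalIntegral_tendsto_integral_Ioi s
    (hgi.mono_set (Ioi_subset_Ioi hs.le)) Filter.tendsto_id
  refine le_of_tendsto hT ?_
  filter_upwards [Filter.eventually_ge_atTop s] with A hA
  simp only [id_eq]
  -- substitution t = s^2/x on [s^2/A, s]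
  have hApos : 0 < A := lt_of_lt_of_le hs hA
  have hc : 0 < s^2/A := by positivity
  have hcs : s^2/A ≤ s := by
    rw [div_le_iff₀ hApos]; nlinarith
  have himage : uIcc (s^2/A) s ⊆ Ioi 0 := by
    rw [uIcc_of_le hcs]
    exact fun x hx => lt_of_lt_of_le hc hx.1
  have hd : ∀ x ∈ uIcc (s^2/A) s, HasDerivAt (fun x : ℝ => s^2/x) (-(s^2/x^2)) x := by
    intro x hx
    have hx0 : x ≠ 0 := ne_of_gt (himage hx)
    have := (hasDerivAt_inv hx0).const_mul (s^2)
    simpa [div_eq_mul_inv, mul_neg] using this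
  have hd' : ContinuousOn (fun x : ℝ => -(s^2/x^2)) (uIcc (s^2/A) s) := by
    apply ContinuousOn.neg
    apply continuousOn_const.div (continuousOn_pow 2)
    exact fun x hx => pow_ne_zero 2 (ne_of_gt (himage hx))
  have himage2 : (fun x : ℝ => s^2/x) '' uIcc (s^2/A) s ⊆ Ioi 0 := by
    rintro - ⟨x, hx, rfl⟩
    exact div_pos (pow_pos hs 2) (himage hx)
  have hsub : (∫ t in s..A, g t) = ∫ x in (s^2/A)..s, (s^2/x^2) * g (s^2/x) := by
    have := intervalIntegral.integral_comp_smul_deriv' hd hd' (hgc.mono himage2)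
    have hfa : s^2/(s^2/A) = A := by field_simp
    have hfs : s^2/s = s := by field_simp
    rw [hfa, hfs] at this
    rw [intervalIntegral.integral_symm A s, ← this, ← intervalIntegral.integral_neg]
    congr 1 with x
    simp [smul_eq_mul, Function.comp]
  rw [hsub]
  have hint2 : IntervalIntegrable g volume (s^2/A) s :=
    (hgc.mono ((uIcc_of_le hcs ▸ himage))).intervalIntegrable
  have hcont1 : ContinuousOn (fun x : ℝ => (s^2/x^2) * g (s^2/x)) (uIcc (s^2/A) s) := by
    apply ContinuousOn.mul
    · apply continuousOn_const.div (continuousOn_pow 2)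
      exact fun x hx => pow_ne_zero 2 (ne_of_gt (himage hx))
    · apply hgc.comp
      · apply continuousOn_const.div continuousOn_id
        exact fun x hx => ne_of_gt (himage hx)
      · intro x hx
        exact div_pos (pow_pos hs 2) (himage hx)
  have hint1 : IntervalIntegrable (fun x : ℝ => (s^2/x^2) * g (s^2/x)) volume (s^2/A) s :=
    hcont1.intervalIntegrable
  have step1 : (∫ x in (s^2/A)..s, (s^2/x^2) * g (s^2/x)) ≤ ∫ x in (s^2/A)..s, g x := by
    apply intervalIntegral.integral_mono_on hcs hint1 hint2
    intro x hx
    exact my_core hs (lt_of_lt_of_le hc hx.1) hx.2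
  have step2 : (∫ x in (s^2/A)..s, g x) ≤ ∫ x in Ioc 0 s, g x := by
    rw [intervalIntegral.integral_of_le hcs]
    apply setIntegral_mono_set (hgi.mono_set Ioc_subset_Ioi_self)
    · apply (ae_restrict_iff' measurableSet_Ioc).mpr
      apply Filter.Eventually.of_forall
      intro x hx
      have : (0:ℝ) < x := hx.1
      positivity
    · apply HasSubset.Subset.eventuallyLE
      exact Ioc_subset_Ioc hc.le le_rfl
  linarith

/-- For every `n ≥ 1`, the lower incomplete gamma function satisfies
`γ(n/2, n/2) ≥ (1/2)Γ(n/2)`, i.e. `∫₀^{n/2} t^{n/2-1} e^{-t} dt ≥ (1/2)Γ(n/2)`.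
Probabilistically: a chi-squared random variable with `n` degrees of freedom is at most `n`
with probability at least `1/2`. -/
theorem lower_incomplete_gamma_ge_half (n : ℕ) (hn : 1 ≤ n) :
    (1/2) * Real.Gamma ((n : ℝ) / 2) ≤
      ∫ t in (0 : ℝ)..((n : ℝ) / 2), t ^ ((n : ℝ) / 2 - 1) * Real.exp (-t) := by
  have hn' : (1:ℝ) ≤ n := by exact_mod_cast hn
  set s : ℝ := (n : ℝ) / 2 with hsdef
  have hs : 0 < s := by rw [hsdef]; linarith
  have hgi : IntegrableOn (fun t => Real.exp (-t) * t ^ (s-1)) (Ioi 0) :=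
    Real.GammaIntegral_convergent hs
  have hsplit : Real.Gamma s =
      (∫ t in Ioc 0 s, Real.exp (-t) * t ^ (s-1)) + ∫ t in Ioi s, Real.exp (-t) * t ^ (s-1) := by
    rw [Real.Gamma_eq_integral hs, ← Ioc_union_Ioi_eq_Ioi hs.le,
      setIntegral_union (Ioc_disjoint_Ioi le_rfl) measurableSet_Ioi
        (hgi.mono_set Ioc_subset_Ioi_self) (hgi.mono_set (Ioi_subset_Ioi hs.le))]
  have hkey := my_tail_le_head hs
  have hrw : (∫ t in (0:ℝ)..s, t ^ (s - 1) * Real.exp (-t))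
      = ∫ t in Ioc 0 s, Real.exp (-t) * t ^ (s-1) := by
    rw [intervalIntegral.integral_of_le hs.le]
    simp_rw [mul_comm]
  rw [hrw]
  linarith
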